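/- Fix q ≥ 2 and indices 1 ≤ i ≤ j < q. Let F₁ be the free group on one generator z, let ψ₁ : F₁ → G_{i..j} send z to a_j, and let ψ₂ : F₁ → G_{j,j+1} send z to a_j. Then the pushout of ψ₁ and ψ₂ is isomorphic to G_{i..j+1}, via an isomorphism sending the image of each generator a_p to the generator a_p of G_{i..j+1}. -/

import Mathlib

/-- The relators `a_p a_{p−1} a_p⁻¹ a_{p−1}⁻²` (for `i < p ≤ j`) of the group `G_{i..j}`. -/
def segRels (i j : ℕ) : Set (FreeGroup {p : ℕ // i ≤ p ∧ p ≤ j}) :=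
  {r | ∃ (p : ℕ) (h1 : i < p) (h2 : p ≤ j),
    r = FreeGroup.of ⟨p, le_of_lt h1, h2⟩ * FreeGroup.of ⟨p - 1, by omega, by omega⟩ *
        (FreeGroup.of ⟨p, le_of_lt h1, h2⟩)⁻¹ *
        (FreeGroup.of ⟨p - 1, by omega, by omega⟩ * FreeGroup.of ⟨p - 1, by omega, by omega⟩)⁻¹}

/-- The group `G_{i..j} = ⟨a_i, …, a_j ∣ a_p a_{p−1} a_p⁻¹ = a_{p−1}² for i < p ≤ j⟩`. -/
abbrev Gseg (i j : ℕ) : Type := PresentedGroup (segRels i j)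

/-- The generator `a_p` of `G_{i..j}`. -/
def sgen (i j : ℕ) (p : ℕ) (h1 : i ≤ p) (h2 : p ≤ j) : Gseg i j :=
  PresentedGroup.of ⟨p, h1, h2⟩

/-- The pair of groups `(G_{i..j}, G_{j,j+1})`. -/
def segFam (i j : ℕ) : Fin 2 → Type
  | ⟨0, _⟩ => Gseg i j
  | ⟨1, _⟩ => Gseg j (j + 1)

instance (i j : ℕ) : ∀ k : Fin 2, Group (segFam i j k)
  | ⟨0, _⟩ => inferInstanceAs (Group (Gseg i j))
  | ⟨1, _⟩ => inferInstanceAs (Group (Gseg j (j + 1)))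

/-- The pair of homomorphisms `ψ₁ : F₁ → G_{i..j}` and `ψ₂ : F₁ → G_{j,j+1}` from the free
group `F₁` on one generator `z`, both sending `z` to `a_j`. -/
def segPhi (i j : ℕ) (h : i ≤ j) : ∀ k : Fin 2, FreeGroup Unit →* segFam i j k
  | ⟨0, _⟩ => FreeGroup.lift fun _ => sgen i j j h le_rfl
  | ⟨1, _⟩ => FreeGroup.lift fun _ => sgen j (j + 1) j le_rfl (Nat.le_succ j)

lemma sgen_rel (i j p : ℕ) (h1 : i < p) (h2 : p ≤ j) :
    sgen i j p h1.le h2 * sgen i j (p-1) (by omega) (by omega) *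
      (sgen i j p h1.le h2)⁻¹ *
      (sgen i j (p-1) (by omega) (by omega) * sgen i j (p-1) (by omega) (by omega))⁻¹ = 1 := by
  have hr : (FreeGroup.of ⟨p, le_of_lt h1, h2⟩ * FreeGroup.of ⟨p - 1, by omega, by omega⟩ *
        (FreeGroup.of ⟨p, le_of_lt h1, h2⟩)⁻¹ *
        (FreeGroup.of (⟨p - 1, by omega, by omega⟩ : {x : ℕ // i ≤ x ∧ x ≤ j}) *
          FreeGroup.of ⟨p - 1, by omega, by omega⟩)⁻¹) ∈ segRels i j :=
    ⟨p, h1, h2, rfl⟩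
  have := (QuotientGroup.eq_one_iff (G := FreeGroup {x : ℕ // i ≤ x ∧ x ≤ j})
    (N := Subgroup.normalClosure (segRels i j)) _).mpr (Subgroup.subset_normalClosure hr)
  exact this

/-- Forward map `G_{i..j} →* G_{i..j+1}`. -/
def fwd0 (i j : ℕ) : Gseg i j →* Gseg i (j + 1) :=
  PresentedGroup.toGroup (f := fun x => sgen i (j+1) x.1 x.2.1 (by omega)) <| by
    rintro r ⟨p, h1, h2, rfl⟩
    simp only [map_mul, map_inv, FreeGroup.lift_apply_of]
    exact sgen_rel i (j+1) p h1 (by omega)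

/-- Forward map `G_{j,j+1} →* G_{i..j+1}`. -/
def fwd1 (i j : ℕ) (hij : i ≤ j) : Gseg j (j + 1) →* Gseg i (j + 1) :=
  PresentedGroup.toGroup (f := fun x => sgen i (j+1) x.1 (le_trans hij x.2.1) x.2.2) <| by
    rintro r ⟨p, h1, h2, rfl⟩
    simp only [map_mul, map_inv, FreeGroup.lift_apply_of]
    exact sgen_rel i (j+1) p (by omega) h2

def fwdFam (i j : ℕ) (hij : i ≤ j) : ∀ k : Fin 2, segFam i j k →* Gseg i (j + 1)
  | ⟨0, _⟩ => fwd0 i j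
  | ⟨1, _⟩ => fwd1 i j hij

lemma fwdFam_comp (i j : ℕ) (hij : i ≤ j) : ∀ k : Fin 2,
    (fwdFam i j hij k).comp (segPhi i j hij k) =
      FreeGroup.lift fun _ => sgen i (j+1) j hij (by omega)
  | ⟨0, _⟩ => by
      ext x
      simp only [MonoidHom.comp_apply]
      show fwd0 i j (FreeGroup.lift (fun _ => sgen i j j hij le_rfl) (FreeGroup.of x)) = _
      rw [FreeGroup.lift_apply_of, FreeGroup.lift_apply_of]
      simp [fwd0, sgen]
  | ⟨1, _⟩ => by
      ext x
      simp only [MonoidHom.comp_apply]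
      show fwd1 i j hij
        (FreeGroup.lift (fun _ => sgen j (j+1) j le_rfl (Nat.le_succ j)) (FreeGroup.of x)) = _
      rw [FreeGroup.lift_apply_of, FreeGroup.lift_apply_of]
      simp [fwd1, sgen]

def fwd (i j : ℕ) (hij : i ≤ j) : Monoid.PushoutI (segPhi i j hij) →* Gseg i (j + 1) :=
  Monoid.PushoutI.lift (fwdFam i j hij) (FreeGroup.lift fun _ => sgen i (j+1) j hij (by omega))
    (fwdFam_comp i j hij)

def bwd (i j : ℕ) (hij : i ≤ j) : Gseg i (j + 1) →* Monoid.PushoutI (segPhi i j hij) :=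
  PresentedGroup.toGroup (f := fun x =>
    if h : x.1 ≤ j then Monoid.PushoutI.of (φ := segPhi i j hij) 0 (sgen i j x.1 x.2.1 h)
    else Monoid.PushoutI.of (φ := segPhi i j hij) 1
      (sgen j (j+1) x.1 (by omega) x.2.2)) <| by
    rintro r ⟨p, h1, h2, rfl⟩
    simp only [map_mul, map_inv, FreeGroup.lift_apply_of]
    by_cases hp : p ≤ j
    · rw [dif_pos hp, dif_pos (show p - 1 ≤ j by omega)]
      let f : Gseg i j →* Monoid.PushoutI (segPhi i j hij) := Monoid.PushoutI.of (φ := segPhi i j hij) 0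
      have := congrArg f (sgen_rel i j p h1 hp)
      simp only [map_mul, map_inv, map_one] at this
      exact this
    · have hpj : p = j + 1 := by omega
      rw [dif_neg hp, dif_pos (show p - 1 ≤ j by omega)]
      have hbase : Monoid.PushoutI.of (φ := segPhi i j hij) 0 (sgen i j (p-1) (by omega) (by omega))
          = Monoid.PushoutI.of (φ := segPhi i j hij) 1 (sgen j (j+1) (p-1) (by omega) (by omega)) := by
        have hp1 : p - 1 = j := by omega
        subst hpj
        have e0 : sgen i j (j+1-1) (by omega) (by omega) = segPhi i j hij 0 (FreeGroup.of ()) := by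
          simp [segPhi, FreeGroup.lift_apply_of]
          exact FreeGroup.lift_apply_of.symm
        have e1 : sgen j (j+1) (j+1-1) (by omega) (by omega) = segPhi i j hij 1 (FreeGroup.of ()) := by
          simp [segPhi, FreeGroup.lift_apply_of]
          exact FreeGroup.lift_apply_of.symm
        rw [e0, e1, Monoid.PushoutI.of_apply_eq_base, Monoid.PushoutI.of_apply_eq_base]
      rw [hbase]
      let f : Gseg j (j + 1) →* Monoid.PushoutI (segPhi i j hij) := Monoid.PushoutI.of (φ := segPhi i j hij) 1
      have := congrArg f
        (sgen_rel j (j+1) p (by omega) (by omega))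
      simp only [map_mul, map_inv, map_one] at this
      exact this

lemma fwd_of0 (i j : ℕ) (hij : i ≤ j) (p : ℕ) (h1 : i ≤ p) (h2 : p ≤ j) :
    fwd i j hij (Monoid.PushoutI.of (φ := segPhi i j hij) 0 (sgen i j p h1 h2))
      = sgen i (j+1) p h1 (by omega) := by
  rw [fwd]
  erw [Monoid.PushoutI.lift_of]
  show fwd0 i j (sgen i j p h1 h2) = _
  simp [fwd0, sgen]

lemma fwd_of1 (i j : ℕ) (hij : i ≤ j) (p : ℕ) (h1 : j ≤ p) (h2 : p ≤ j + 1) :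
    fwd i j hij (Monoid.PushoutI.of (φ := segPhi i j hij) 1 (sgen j (j+1) p h1 h2))
      = sgen i (j+1) p (by omega) h2 := by
  rw [fwd]
  erw [Monoid.PushoutI.lift_of]
  show fwd1 i j hij (sgen j (j+1) p h1 h2) = _
  simp [fwd1, sgen]

lemma bwd_of (i j : ℕ) (hij : i ≤ j) (x : {p : ℕ // i ≤ p ∧ p ≤ j + 1}) :
    bwd i j hij (PresentedGroup.of x) =
      if h : x.1 ≤ j then Monoid.PushoutI.of (φ := segPhi i j hij) 0 (sgen i j x.1 x.2.1 h)
      else Monoid.PushoutI.of (φ := segPhi i j hij) 1 (sgen j (j+1) x.1 (by omega) x.2.2) := by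
  simp [bwd]

lemma of0_eq_of1 (i j : ℕ) (hij : i ≤ j) :
    Monoid.PushoutI.of (φ := segPhi i j hij) 0 (sgen i j j hij le_rfl)
      = Monoid.PushoutI.of (φ := segPhi i j hij) 1 (sgen j (j+1) j le_rfl (Nat.le_succ j)) := by
  have e0 : sgen i j j hij le_rfl = segPhi i j hij 0 (FreeGroup.of ()) := by
    show _ = FreeGroup.lift (fun _ => sgen i j j hij le_rfl) (FreeGroup.of ())
    rw [FreeGroup.lift_apply_of]
  have e1 : sgen j (j+1) j le_rfl (Nat.le_succ j) = segPhi i j hij 1 (FreeGroup.of ()) := by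
    show _ = FreeGroup.lift (fun _ => sgen j (j+1) j le_rfl (Nat.le_succ j)) (FreeGroup.of ())
    rw [FreeGroup.lift_apply_of]
  rw [e0, e1, Monoid.PushoutI.of_apply_eq_base, Monoid.PushoutI.of_apply_eq_base]

lemma bwd_fwd (i j : ℕ) (hij : i ≤ j) :
    (bwd i j hij).comp (fwd i j hij) = MonoidHom.id _ := by
  apply Monoid.PushoutI.hom_ext_nonempty
  intro k
  match k with
  | ⟨0, hk⟩ =>
    refine PresentedGroup.ext fun x => ?_
    rcases x with ⟨p, hp1, hp2⟩
    show bwd i j hij (fwd i j hij (Monoid.PushoutI.of (φ := segPhi i j hij) 0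
      (sgen i j p hp1 hp2))) = Monoid.PushoutI.of (φ := segPhi i j hij) 0 (sgen i j p hp1 hp2)
    rw [fwd_of0]
    rw [show (sgen i (j+1) p hp1 (by omega) : Gseg i (j+1)) =
      PresentedGroup.of ⟨p, hp1, by omega⟩ from rfl, bwd_of, dif_pos hp2]
  | ⟨1, hk⟩ =>
    refine PresentedGroup.ext fun x => ?_
    rcases x with ⟨p, hp1, hp2⟩
    show bwd i j hij (fwd i j hij (Monoid.PushoutI.of (φ := segPhi i j hij) 1
      (sgen j (j+1) p hp1 hp2))) = Monoid.PushoutI.of (φ := segPhi i j hij) 1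
      (sgen j (j+1) p hp1 hp2)
    rw [fwd_of1]
    rw [show (sgen i (j+1) p (by omega) hp2 : Gseg i (j+1)) =
      PresentedGroup.of ⟨p, by omega, hp2⟩ from rfl, bwd_of]
    by_cases hp : p ≤ j
    · have hpj : p = j := le_antisymm hp hp1
      subst hpj
      rw [dif_pos hp]
      exact of0_eq_of1 _ _ hij
    · rw [dif_neg hp]

lemma fwd_bwd (i j : ℕ) (hij : i ≤ j) :
    (fwd i j hij).comp (bwd i j hij) = MonoidHom.id _ := by
  refine PresentedGroup.ext fun x => ?_
  rcases x with ⟨p, hp1, hp2⟩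
  show fwd i j hij (bwd i j hij (PresentedGroup.of ⟨p, hp1, hp2⟩)) =
    PresentedGroup.of ⟨p, hp1, hp2⟩
  rw [bwd_of]
  by_cases hp : p ≤ j
  · rw [dif_pos hp, fwd_of0]
    rfl
  · rw [dif_neg hp, fwd_of1]
    rfl


/-- For `q ≥ 2` and `1 ≤ i ≤ j < q`, the pushout of
`ψ₁ : F₁ → G_{i..j}` and `ψ₂ : F₁ → G_{j,j+1}` (both sending the generator `z` of `F₁`
to `a_j`) is isomorphic to `G_{i..j+1}`, via an isomorphism sending the image of each
generator `a_p` to the generator `a_p` of `G_{i..j+1}`. -/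
theorem gseg_pushout_iso (q i j : ℕ) (hq : 2 ≤ q) (hi : 1 ≤ i) (hij : i ≤ j) (hjq : j < q) :
    ∃ ψ : Monoid.PushoutI (segPhi i j hij) ≃* Gseg i (j + 1),
      (∀ (p : ℕ) (h1 : i ≤ p) (h2 : p ≤ j),
        ψ (Monoid.PushoutI.of (φ := segPhi i j hij) 0 (sgen i j p h1 h2))
          = sgen i (j + 1) p h1 (by omega)) ∧
      (∀ (p : ℕ) (h1 : j ≤ p) (h2 : p ≤ j + 1),
        ψ (Monoid.PushoutI.of (φ := segPhi i j hij) 1 (sgen j (j + 1) p h1 h2))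
          = sgen i (j + 1) p (by omega) h2) := by
  refine ⟨MonoidHom.toMulEquiv (fwd i j hij) (bwd i j hij) (bwd_fwd i j hij) (fwd_bwd i j hij),
    fun p h1 h2 => ?_, fun p h1 h2 => ?_⟩
  · exact fwd_of0 i j hij p h1 h2
  · exact fwd_of1 i j hij p h1 h2
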